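/- On the real Banach space ℓ∞(ℕ) of bounded real sequences, the continuous seminorm p(x) = limsup_{n→∞} |x_n| is nowhere Gâteaux-differentiable: for every x ∈ ℓ∞(ℕ) there is no continuous linear functional F on ℓ∞(ℕ) such that lim_{t→0, t≠0} (p(x + t h) − p(x))/t = F(h) for all h ∈ ℓ∞(ℕ). -/

import Mathlib

open Filter Topology ENNReal

set_option maxHeartbeats 1000000
set_option synthInstance.maxHeartbeats 100000

/-- **Example 1 (ii), second part.** On `ℓ∞(ℕ)`, the continuous seminorm
`p x = limsup |x_n|` is nowhere Gâteaux-differentiable. -/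
theorem statement9 (p : lp (fun _ : ℕ => ℝ) ∞ → ℝ)
    (hp : ∀ x : lp (fun _ : ℕ => ℝ) ∞, p x = Filter.limsup (fun n : ℕ => |x n|) atTop) :
    ∀ x : lp (fun _ : ℕ => ℝ) ∞,
      ¬ ∃ F : lp (fun _ : ℕ => ℝ) ∞ →L[ℝ] ℝ,
        ∀ h : lp (fun _ : ℕ => ℝ) ∞,
          Tendsto (fun t : ℝ => (p (x + t • h) - p x) / t) (𝓝[≠] (0 : ℝ)) (𝓝 (F h)) := by
  classical
  intro x
  rintro ⟨F, hF⟩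
  set u : ℕ → ℝ := fun n => |x n| with hu_def
  set L : ℝ := Filter.limsup u atTop with hL_def
  have hub : ∀ n, u n ≤ ‖x‖ := fun n => by
    simpa [Real.norm_eq_abs] using lp.norm_apply_le_norm ENNReal.top_ne_zero x n
  have hbdd : IsBoundedUnder (· ≤ ·) atTop u := isBoundedUnder_of ⟨‖x‖, hub⟩
  have hlb : ∀ n, (0:ℝ) ≤ u n := fun n => abs_nonneg _
  have hcob : IsCoboundedUnder (· ≤ ·) atTop u := isCoboundedUnder_le_of_le atTop hlb
  -- extract a subsequence along which `u` tends to `L`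
  have hfreq : ∀ m : ℕ, ∃ᶠ k in atTop, |u k - L| < 1/(m+1) := by
    intro m
    have hpos : (0:ℝ) < 1/(m+1) := by positivity
    have h1 : ∃ᶠ k in atTop, L - 1/(m+1) < u k :=
      frequently_lt_of_lt_limsup hcob (by linarith)
    have h2 : ∀ᶠ k in atTop, u k < L + 1/(m+1) :=
      eventually_lt_of_limsup_lt (by linarith) hbdd
    exact (h1.and_eventually h2).mono fun k hk =>
      abs_sub_lt_iff.2 ⟨by linarith [hk.1, hk.2], by linarith [hk.1, hk.2]⟩
  obtain ⟨φ, hφmono, hφ⟩ := Filter.extraction_forall_of_frequently hfreq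
  have hφtend : Tendsto (fun m => u (φ m)) atTop (𝓝 L) := by
    rw [← tendsto_sub_nhds_zero_iff]
    refine squeeze_zero_norm (fun m => ?_) tendsto_one_div_add_atTop_nhds_zero_nat
    simpa [Real.norm_eq_abs] using (hφ m).le
  -- signs
  set s : ℕ → ℝ := fun n => if 0 ≤ x n then 1 else -1 with hs_def
  have hs1 : ∀ n, |s n| = 1 := fun n => by
    by_cases hn : 0 ≤ x n <;> simp [hs_def, hn]
  have hsx : ∀ n, x n = s n * u n := fun n => by
    by_cases hn : 0 ≤ x n
    · simp [hs_def, hu_def, hn, abs_of_nonneg hn]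
    · simp [hs_def, hu_def, hn, abs_of_neg (lt_of_not_ge hn)]
  -- the direction
  set A : Set ℕ := Set.range (fun k => φ (2*k)) with hA_def
  set B : Set ℕ := Set.range (fun k => φ (2*k+1)) with hB_def
  have hAB : ∀ k : ℕ, φ (2*k+1) ∉ A := by
    rintro k ⟨j, hj⟩
    have := hφmono.injective hj
    omega
  set g : ℕ → ℝ := fun n => if n ∈ A then s n else if n ∈ B then -(s n) else 0 with hg_def
  have hg1 : ∀ n, |g n| ≤ 1 := fun n => by
    by_cases h1 : n ∈ A
    · simp [hg_def, h1, (hs1 n).le]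
    · by_cases h2 : n ∈ B <;> simp [hg_def, h1, h2, (hs1 n).le]
  have hgmem : Memℓp g ∞ := by
    apply memℓp_infty
    refine ⟨1, ?_⟩
    rintro r ⟨n, rfl⟩
    simpa [Real.norm_eq_abs] using hg1 n
  set w : lp (fun _ : ℕ => ℝ) ∞ := ⟨g, hgmem⟩ with hw_def
  have hcoe : ∀ (t : ℝ) (n : ℕ), (x + t • w) n = x n + t * g n := by
    intro t n
    have : w n = g n := rfl
    show x n + t • w n = _
    rw [this, smul_eq_mul]
  have hm2 : Tendsto (fun k : ℕ => 2*k) atTop atTop :=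
    StrictMono.tendsto_atTop (fun a b hab => by omega)
  have hm2' : Tendsto (fun k : ℕ => 2*k+1) atTop atTop :=
    StrictMono.tendsto_atTop (fun a b hab => by omega)
  -- key limsup computation
  have key : ∀ t : ℝ, Filter.limsup (fun n => |x n + t * g n|) atTop = L + |t| := by
    intro t
    have htg : ∀ n, |t * g n| ≤ |t| := fun n => by
      rw [abs_mul]
      nlinarith [hg1 n, abs_nonneg t, abs_nonneg (g n)]
    have hboundv : ∀ n, |x n + t * g n| ≤ ‖x‖ + |t| := fun n =>
      (abs_add_le _ _).trans (add_le_add (hub n) (htg n))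
    have hbddv : IsBoundedUnder (· ≤ ·) atTop (fun n => |x n + t * g n|) :=
      isBoundedUnder_of ⟨‖x‖ + |t|, hboundv⟩
    have hcobv : IsCoboundedUnder (· ≤ ·) atTop (fun n => |x n + t * g n|) :=
      isCoboundedUnder_le_of_le atTop fun n => abs_nonneg _
    apply le_antisymm
    · apply _root_.le_of_forall_pos_le_add
      intro ε hε
      have hev : ∀ᶠ n in atTop, u n < L + ε := eventually_lt_of_limsup_lt (by linarith) hbdd
      refine limsup_le_of_le hcobv (hev.mono fun n hn => ?_)
      have := (abs_add_le (x n) (t * g n)).trans (add_le_add le_rfl (htg n))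
      have hxu : |x n| = u n := rfl
      linarith [this, hn]
    · apply _root_.le_of_forall_pos_le_add
      intro ε hε
      have hfr : ∃ᶠ n in atTop, L + |t| - ε ≤ |x n + t * g n| := by
        rcases le_or_gt 0 t with ht | ht
        · -- use the even part A
          have hAk : ∀ k : ℕ, φ (2*k) ∈ A := fun k => ⟨k, rfl⟩
          have hval : ∀ k : ℕ, |x (φ (2*k)) + t * g (φ (2*k))| = u (φ (2*k)) + t := by
            intro k
            have hgA : g (φ (2*k)) = s (φ (2*k)) := by simp [hg_def, hAk k]
            rw [hgA, hsx (φ (2*k))]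
            have : s (φ (2*k)) * u (φ (2*k)) + t * s (φ (2*k))
                = s (φ (2*k)) * (u (φ (2*k)) + t) := by ring
            rw [this, abs_mul, hs1, one_mul, abs_of_nonneg (by linarith [hlb (φ (2*k))])]
          have htend : Tendsto (fun k => |x (φ (2*k)) + t * g (φ (2*k))|) atTop (𝓝 (L + t)) := by
            simp only [hval]
            exact (hφtend.comp hm2).add_const t
          have hevk : ∀ᶠ k in atTop, L + |t| - ε ≤ |x (φ (2*k)) + t * g (φ (2*k))| := by
            refine htend.eventually (eventually_ge_nhds ?_)
            rw [abs_of_nonneg ht]; linarith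
          exact (hφmono.tendsto_atTop.comp hm2).frequently hevk.frequently
        · -- use the odd part B
          have hBk : ∀ k : ℕ, φ (2*k+1) ∈ B := fun k => ⟨k, rfl⟩
          have hval : ∀ k : ℕ, |x (φ (2*k+1)) + t * g (φ (2*k+1))| = u (φ (2*k+1)) - t := by
            intro k
            have hgB : g (φ (2*k+1)) = -(s (φ (2*k+1))) := by
              simp [hg_def, hAB k, hBk k]
            rw [hgB, hsx (φ (2*k+1))]
            have : s (φ (2*k+1)) * u (φ (2*k+1)) + t * -(s (φ (2*k+1)))
                = s (φ (2*k+1)) * (u (φ (2*k+1)) - t) := by ring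
            rw [this, abs_mul, hs1, one_mul,
              abs_of_nonneg (by linarith [hlb (φ (2*k+1))])]
          have htend : Tendsto (fun k => |x (φ (2*k+1)) + t * g (φ (2*k+1))|) atTop
              (𝓝 (L - t)) := by
            simp only [hval]
            exact (hφtend.comp hm2').sub_const t
          have hevk : ∀ᶠ k in atTop, L + |t| - ε ≤ |x (φ (2*k+1)) + t * g (φ (2*k+1))| := by
            refine htend.eventually (eventually_ge_nhds ?_)
            rw [abs_of_neg ht]; linarith
          exact (hφmono.tendsto_atTop.comp hm2').frequently hevk.frequently
      have := le_limsup_of_frequently_le hfr hbddv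
      linarith
  -- values of p along the direction w
  have hq : ∀ t : ℝ, p (x + t • w) = L + |t| := by
    intro t
    rw [hp]
    have : (fun n : ℕ => |(x + t • w) n|) = fun n => |x n + t * g n| := by
      funext n; rw [hcoe t n]
    rw [this, key t]
  have hq0 : p x = L := hp x
  have hquot : ∀ t : ℝ, (p (x + t • w) - p x) / t = |t| / t := by
    intro t; rw [hq, hq0]; ring_nf
  -- right limit gives F w = 1
  have hsub₁ : 𝓝[>] (0:ℝ) ≤ 𝓝[≠] (0:ℝ) :=
    nhdsWithin_mono 0 fun t ht => by simpa using ne_of_gt ht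
  have hsub₂ : 𝓝[<] (0:ℝ) ≤ 𝓝[≠] (0:ℝ) :=
    nhdsWithin_mono 0 fun t ht => by simpa using ne_of_lt ht
  have h1 : Tendsto (fun t : ℝ => (p (x + t • w) - p x) / t) (𝓝[>] 0) (𝓝 (F w)) :=
    (hF w).mono_left hsub₁
  have h1' : Tendsto (fun t : ℝ => (p (x + t • w) - p x) / t) (𝓝[>] 0) (𝓝 1) := by
    apply Tendsto.congr' _ tendsto_const_nhds
    filter_upwards [self_mem_nhdsWithin] with t ht
    rw [hquot t, abs_of_pos ht, div_self (ne_of_gt ht)]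
  have h2 : Tendsto (fun t : ℝ => (p (x + t • w) - p x) / t) (𝓝[<] 0) (𝓝 (F w)) :=
    (hF w).mono_left hsub₂
  have h2' : Tendsto (fun t : ℝ => (p (x + t • w) - p x) / t) (𝓝[<] 0) (𝓝 (-1)) := by
    apply Tendsto.congr' _ tendsto_const_nhds
    filter_upwards [self_mem_nhdsWithin] with t ht
    rw [hquot t, abs_of_neg ht, neg_div, div_self (ne_of_lt ht)]
  have e1 : F w = 1 := tendsto_nhds_unique h1 h1'
  have e2 : F w = -1 := tendsto_nhds_unique h2 h2'
  rw [e1] at e2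
  norm_num at e2
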